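/- Let A be an m×n real matrix with nonnegative entries and b ∈ ℝ^m nonnegative, and suppose the feasible region {x ∈ ℝ^n : Ax ≥ b, x ≥ 0} is nonempty. Then the minimum of ‖x‖₁ over the feasible region is attained, and moreover it is attained by a feasible solution having at most m nonzero components. -/

import Mathlib

open Finset

/-- Auxiliary sparsification lemma: any minimizer can be replaced by a minimizer with
support of size at most `m`, by induction on the support size. -/
lemma lp_sparsify (m n : ℕ) (A : Matrix (Fin m) (Fin n) ℝ) (b : Fin m → ℝ) :
    ∀ k : ℕ, ∀ x : Fin n → ℝ, (∀ j, 0 ≤ x j) → (∀ i, b i ≤ A.mulVec x i) →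
    (∀ y : Fin n → ℝ, (∀ j, 0 ≤ y j) → (∀ i, b i ≤ A.mulVec y i) →
        ∑ j, |x j| ≤ ∑ j, |y j|) →
    (Finset.univ.filter (fun j => x j ≠ 0)).card ≤ k →
    ∃ x' : Fin n → ℝ, (∀ j, 0 ≤ x' j) ∧ (∀ i, b i ≤ A.mulVec x' i) ∧
      (∀ y : Fin n → ℝ, (∀ j, 0 ≤ y j) → (∀ i, b i ≤ A.mulVec y i) →
        ∑ j, |x' j| ≤ ∑ j, |y j|) ∧
      (Finset.univ.filter (fun j => x' j ≠ 0)).card ≤ m := by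
  intro k
  induction k with
  | zero =>
    intro x hx hxf hxm hcard
    exact ⟨x, hx, hxf, hxm, le_trans hcard (Nat.zero_le m)⟩
  | succ k ih =>
    intro x hx hxf hxm hcard
    by_cases hsm : (Finset.univ.filter (fun j => x j ≠ 0)).card ≤ m
    · exact ⟨x, hx, hxf, hxm, hsm⟩
    push_neg at hsm
    set T : Finset (Fin n) := Finset.univ.filter (fun j => x j ≠ 0) with hT
    have hTpos : ∀ j ∈ T, 0 < x j := by
      intro j hj
      rcases (hx j).lt_or_eq with h | h
      · exact h
      · exact absurd h.symm (by simpa [hT] using hj)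
    -- columns of A indexed by T are linearly dependent
    have hdep : ¬ LinearIndependent ℝ (fun j : T => (fun i => A i j) : T → (Fin m → ℝ)) := by
      intro hli
      have := hli.fintype_card_le_finrank
      rw [Module.finrank_fintype_fun_eq_card] at this
      simp only [Fintype.card_coe, Fintype.card_fin] at this
      omega
    rw [Fintype.not_linearIndependent_iff] at hdep
    obtain ⟨g, hg0, ⟨j₀, hj₀⟩⟩ := hdep
    classical
    set d : Fin n → ℝ := fun j => if h : j ∈ T then g ⟨j, h⟩ else 0 with hd
    have hdT : ∀ j ∉ T, d j = 0 := fun j hj => dif_neg hj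
    have hdne : d (j₀ : Fin n) ≠ 0 := by
      simpa [hd, j₀.2] using hj₀
    have hAd : A.mulVec d = 0 := by
      funext i
      have h2 : ∑ j : T, g j * A i (j : Fin n) = 0 := by
        have := congrFun hg0 i
        simpa using this
      have h3 : A.mulVec d i = ∑ j : T, g j * A i (j : Fin n) := by
        rw [Matrix.mulVec, dotProduct,
          ← Finset.sum_subset (Finset.subset_univ T) (by intro j _ hj; simp [hdT j hj]),
          ← Finset.sum_attach T (fun j => A i j * d j)]
        refine Finset.sum_congr rfl fun j _ => ?_
        simp [hd, j.2, mul_comm]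
      rw [h3]; exact h2
    -- the sum of d over all coordinates must vanish, else we contradict minimality
    have hsum : ∑ j, d j = 0 := by
      by_contra hs
      -- perturb x in the direction decreasing the ℓ¹ norm
      set u : Fin n → ℝ := if 0 < ∑ j, d j then (fun j => -d j) else d with hu
      have huT : ∀ j ∉ T, u j = 0 := by
        intro j hj; by_cases h : 0 < ∑ j, d j <;> simp [hu, h, hdT j hj]
      have huA : A.mulVec u = 0 := by
        by_cases h : 0 < ∑ j, d j
        · funext i
          simp only [hu, if_pos h]
          have : (fun j => -d j) = -d := rfl
          rw [this, Matrix.mulVec_neg, hAd]; simp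
        · simp [hu, h, hAd]
      have husum : ∑ j, u j < 0 := by
        by_cases h : 0 < ∑ j, d j
        · simp only [hu, if_pos h, Finset.sum_neg_distrib]; linarith
        · simp only [hu, if_neg h]
          rcases lt_or_eq_of_le (not_lt.mp h) with h' | h'
          · exact h'
          · exact absurd h' hs
      -- choose a small step size
      have hTne : T.Nonempty := by
        rw [← Finset.card_pos]; omega
      set c : ℝ := T.inf' hTne x with hc
      have hcpos : 0 < c := by
        rw [hc, Finset.lt_inf'_iff]
        exact fun j hj => hTpos j hj
      set M : ℝ := (∑ j, |u j|) + 1 with hM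
      have hMpos : 0 < M := by
        have : 0 ≤ ∑ j, |u j| := Finset.sum_nonneg fun j _ => abs_nonneg _
        linarith
      have huM : ∀ j, |u j| < M := by
        intro j
        have : |u j| ≤ ∑ j, |u j| :=
          Finset.single_le_sum (fun j _ => abs_nonneg (u j)) (Finset.mem_univ j)
        linarith
      set t : ℝ := c / (2 * M) with ht
      have htpos : 0 < t := div_pos hcpos (by linarith)
      set x' : Fin n → ℝ := fun j => x j + t * u j with hx'
      have hx'pos : ∀ j, 0 ≤ x' j := by
        intro j
        by_cases hj : j ∈ T
        · have h1 : t * |u j| ≤ c / 2 := by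
            rw [ht, div_mul_eq_mul_div, div_le_div_iff₀ (by linarith) (by norm_num)]
            nlinarith [huM j, abs_nonneg (u j), hcpos]
          have h2 : c ≤ x j := Finset.inf'_le x hj
          have h3 : -(t * u j) ≤ t * |u j| := by
            rw [← mul_neg]
            exact mul_le_mul_of_nonneg_left (neg_le_abs (u j)) htpos.le
          simp only [hx']
          nlinarith
        · simp [hx', huT j hj, hx j]
      have hx'feas : ∀ i, b i ≤ A.mulVec x' i := by
        intro i
        have : x' = x + t • u := by funext j; simp [hx', smul_eq_mul]
        rw [this, Matrix.mulVec_add, Matrix.mulVec_smul, huA]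
        simpa using hxf i
      have hlt : ∑ j, |x' j| < ∑ j, |x j| := by
        have e1 : ∑ j, |x' j| = ∑ j, x' j :=
          Finset.sum_congr rfl fun j _ => abs_of_nonneg (hx'pos j)
        have e2 : ∑ j, |x j| = ∑ j, x j :=
          Finset.sum_congr rfl fun j _ => abs_of_nonneg (hx j)
        rw [e1, e2]
        simp only [hx']
        rw [Finset.sum_add_distrib, ← Finset.mul_sum]
        nlinarith
      exact absurd (hxm x' hx'pos hx'feas) (not_le.mpr hlt)
    -- some coordinate of d is negative
    have hneg : ∃ j, d j < 0 := by
      by_contra h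
      push_neg at h
      have : ∀ j ∈ Finset.univ, d j = 0 := by
        intro j _
        have := Finset.sum_eq_zero_iff_of_nonneg (fun j _ => h j) |>.mp hsum
        exact this j (Finset.mem_univ j)
      exact hdne (this j₀ (Finset.mem_univ _))
    obtain ⟨jneg, hjneg⟩ := hneg
    set N : Finset (Fin n) := Finset.univ.filter (fun j => d j < 0) with hN
    have hNne : N.Nonempty := ⟨jneg, by simp [hN, hjneg]⟩
    have hNT : ∀ j ∈ N, j ∈ T := by
      intro j hj
      by_contra hjT
      have := hdT j hjT
      rw [hN, Finset.mem_filter] at hj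
      linarith [hj.2]
    set t : ℝ := N.inf' hNne (fun j => x j / (-d j)) with ht
    have htnn : 0 ≤ t := by
      rw [ht, Finset.le_inf'_iff]
      intro j hj
      rw [hN, Finset.mem_filter] at hj
      exact div_nonneg (hx j) (by linarith [hj.2])
    obtain ⟨j₁, hj₁N, hj₁⟩ := Finset.exists_mem_eq_inf' hNne (fun j => x j / (-d j))
    have hd₁ : d j₁ < 0 := by rw [hN, Finset.mem_filter] at hj₁N; exact hj₁N.2
    set x' : Fin n → ℝ := fun j => x j + t * d j with hx'
    have hx'pos : ∀ j, 0 ≤ x' j := by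
      intro j
      by_cases hdj : d j < 0
      · have hjN : j ∈ N := by simp [hN, hdj]
        have : t ≤ x j / (-d j) := Finset.inf'_le _ hjN
        rw [le_div_iff₀ (by linarith)] at this
        simp only [hx']; nlinarith
      · push_neg at hdj
        simp only [hx']
        nlinarith [hx j, mul_nonneg htnn hdj]
    have hx'feas : ∀ i, b i ≤ A.mulVec x' i := by
      intro i
      have : x' = x + t • d := by funext j; simp [hx', smul_eq_mul]
      rw [this, Matrix.mulVec_add, Matrix.mulVec_smul, hAd]
      simpa using hxf i
    have hx'eq : ∑ j, |x' j| = ∑ j, |x j| := by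
      have e1 : ∑ j, |x' j| = ∑ j, x' j :=
        Finset.sum_congr rfl fun j _ => abs_of_nonneg (hx'pos j)
      have e2 : ∑ j, |x j| = ∑ j, x j :=
        Finset.sum_congr rfl fun j _ => abs_of_nonneg (hx j)
      rw [e1, e2]
      simp only [hx']
      rw [Finset.sum_add_distrib, ← Finset.mul_sum, hsum]
      ring
    have hx'min : ∀ y : Fin n → ℝ, (∀ j, 0 ≤ y j) → (∀ i, b i ≤ A.mulVec y i) →
        ∑ j, |x' j| ≤ ∑ j, |y j| := by
      intro y hy hyf
      rw [hx'eq]; exact hxm y hy hyf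
    -- the support of x' strictly decreased
    have hsupp : (Finset.univ.filter (fun j => x' j ≠ 0)) ⊆ T.erase j₁ := by
      intro j hj
      rw [Finset.mem_filter] at hj
      rw [Finset.mem_erase]
      constructor
      · intro hjj
        apply hj.2
        rw [hjj]
        show x j₁ + t * d j₁ = 0
        rw [ht, hj₁]
        have hne : d j₁ ≠ 0 := hd₁.ne
        field_simp
        ring
      · by_contra hjT
        have hx0 : x j = 0 := by
          by_contra h
          exact hjT (by simp [hT, h])
        exact hj.2 (by show x j + t * d j = 0; rw [hx0, hdT j hjT]; ring)
    have hcard' : (Finset.univ.filter (fun j => x' j ≠ 0)).card ≤ k := by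
      have h1 := Finset.card_le_card hsupp
      have h2 : (T.erase j₁).card = T.card - 1 :=
        Finset.card_erase_of_mem (hNT j₁ hj₁N)
      omega
    exact ih x' hx'pos hx'feas hx'min hcard'

theorem lp_min_attained_basic
    (m n : ℕ) (hm : 0 < m) (hn : 0 < n)
    (A : Matrix (Fin m) (Fin n) ℝ) (hA : ∀ i j, 0 ≤ A i j)
    (b : Fin m → ℝ) (hb : ∀ i, 0 ≤ b i)
    (hfeas : ∃ x : Fin n → ℝ, (∀ j, 0 ≤ x j) ∧ ∀ i, b i ≤ A.mulVec x i) :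
    ∃ x : Fin n → ℝ,
      (∀ j, 0 ≤ x j) ∧ (∀ i, b i ≤ A.mulVec x i) ∧
      (∀ y : Fin n → ℝ, (∀ j, 0 ≤ y j) → (∀ i, b i ≤ A.mulVec y i) →
        ∑ j, |x j| ≤ ∑ j, |y j|) ∧
      (Finset.univ.filter (fun j => x j ≠ 0)).card ≤ m := by
  obtain ⟨x₀, hx₀pos, hx₀feas⟩ := hfeas
  set f : (Fin n → ℝ) → ℝ := fun x => ∑ j, |x j| with hf
  have hfcont : Continuous f := by
    apply continuous_finset_sum
    intro j _
    exact (continuous_apply j).abs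
  set S : Set (Fin n → ℝ) := {x | (∀ j, 0 ≤ x j) ∧ ∀ i, b i ≤ A.mulVec x i} with hS
  have hScl : IsClosed S := by
    have h1 : IsClosed {x : Fin n → ℝ | ∀ j, 0 ≤ x j} := by
      have : {x : Fin n → ℝ | ∀ j, 0 ≤ x j} = ⋂ j, {x | 0 ≤ x j} := by
        ext x; simp [Set.mem_iInter]
      rw [this]
      exact isClosed_iInter fun j => isClosed_le continuous_const (continuous_apply j)
    have h2 : IsClosed {x : Fin n → ℝ | ∀ i, b i ≤ A.mulVec x i} := by
      have : {x : Fin n → ℝ | ∀ i, b i ≤ A.mulVec x i} = ⋂ i, {x | b i ≤ A.mulVec x i} := by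
        ext x; simp [Set.mem_iInter]
      rw [this]
      refine isClosed_iInter fun i => isClosed_le continuous_const ?_
      unfold Matrix.mulVec dotProduct
      exact continuous_finset_sum _ fun j _ => continuous_const.mul (continuous_apply j)
    have : S = {x : Fin n → ℝ | ∀ j, 0 ≤ x j} ∩ {x : Fin n → ℝ | ∀ i, b i ≤ A.mulVec x i} := by
      ext x; constructor
      · rintro ⟨h1, h2⟩; exact ⟨h1, h2⟩
      · rintro ⟨h1, h2⟩; exact ⟨h1, h2⟩
    rw [this]
    exact h1.inter h2
  set K : Set (Fin n → ℝ) := S ∩ {x | f x ≤ f x₀} with hK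
  have hKcl : IsClosed K := hScl.inter (isClosed_le hfcont continuous_const)
  have hKsub : K ⊆ Metric.closedBall 0 (f x₀) := by
    intro x hx
    rw [Metric.mem_closedBall, dist_zero_right]
    have h0 : 0 ≤ f x₀ := Finset.sum_nonneg fun j _ => abs_nonneg _
    rw [pi_norm_le_iff_of_nonneg h0]
    intro j
    have h1 : |x j| ≤ f x :=
      Finset.single_le_sum (fun j _ => abs_nonneg (x j)) (Finset.mem_univ j)
    calc ‖x j‖ = |x j| := rfl
    _ ≤ f x := h1
    _ ≤ f x₀ := hx.2
  have hKcomp : IsCompact K :=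
    (isCompact_closedBall (0 : Fin n → ℝ) (f x₀)).of_isClosed_subset hKcl hKsub
  have hKne : K.Nonempty := ⟨x₀, ⟨hx₀pos, hx₀feas⟩, show f x₀ ≤ f x₀ from le_rfl⟩
  obtain ⟨z, hzK, hzmin⟩ := hKcomp.exists_isMinOn hKne hfcont.continuousOn
  have hzmin' : ∀ y : Fin n → ℝ, (∀ j, 0 ≤ y j) → (∀ i, b i ≤ A.mulVec y i) →
      ∑ j, |z j| ≤ ∑ j, |y j| := by
    intro y hy hyf
    by_cases hy0 : f y ≤ f x₀
    · exact hzmin ⟨⟨hy, hyf⟩, hy0⟩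
    · push_neg at hy0
      calc f z ≤ f x₀ := hzmin ⟨⟨hx₀pos, hx₀feas⟩, show f x₀ ≤ f x₀ from le_rfl⟩
      _ ≤ f y := hy0.le
  exact lp_sparsify m n A b (Finset.univ.filter (fun j => z j ≠ 0)).card z
    hzK.1.1 hzK.1.2 hzmin' (le_refl _)
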